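/- (Omniprediction decomposition, online setting.) Fix losses ℓ : Ω × ∂Δ^k → ℝ for ℓ ∈ L and comparators c : ℝ^d → Ω in C, and suppose predictions p_1,…,p_T ∈ Δ^k satisfy (i) ε_1-multiaccuracy: (1/T)Σ_t ⟨p_t − y_t, d_ℓ(c(x_t))⟩ ≤ ε_1 for all ℓ ∈ L, c ∈ C, and (ii) ε_2-calibration: (1/T)Σ_t ⟨p_t − y_t, −d_ℓ(k*_ℓ(p_t))⟩ ≤ ε_2 for all ℓ ∈ L. Then (1/T)Σ_t ℓ(k*_ℓ(p_t), y_t) ≤ (1/T)Σ_t ℓ(c(x_t), y_t) + ε_1 + ε_2 for all ℓ ∈ L, c ∈ C. -/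

import Mathlib

/-- omniprediction decomposition, online setting. Labels `y_t ∈ ∂Δ^k` are
encoded by their class index, `ℓ w i = ℓ(w, e_i)` is the loss, `d_ℓ(w) i = ℓ w i` the
discrete derivative, and `kstar ℓ` is the ex ante optimum map for `ℓ`. Multiaccuracy and
calibration imply omniprediction with error `ε₁ + ε₂`. -/
theorem stmt_13 {X Ω : Type*} (k T : ℕ) (hT : 0 < T)
    (L : Set (Ω → Fin k → ℝ)) (C : Set (X → Ω))
    (kstar : (Ω → Fin k → ℝ) → (Fin k → ℝ) → Ω)
    (x : Fin T → X) (y : Fin T → Fin k) (p : Fin T → Fin k → ℝ)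
    (hp : ∀ t, p t ∈ stdSimplex ℝ (Fin k))
    (hks : ∀ ℓ ∈ L, ∀ pp ∈ stdSimplex ℝ (Fin k), ∀ w : Ω,
      ∑ i, pp i * ℓ (kstar ℓ pp) i ≤ ∑ i, pp i * ℓ w i)
    (ε1 ε2 : ℝ)
    (hMA : ∀ ℓ ∈ L, ∀ c ∈ C,
      (1 / T : ℝ) * ∑ t, ∑ i, (p t i - if y t = i then 1 else 0) * ℓ (c (x t)) i ≤ ε1)
    (hCal : ∀ ℓ ∈ L,
      (1 / T : ℝ) * ∑ t, ∑ i,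
        (p t i - if y t = i then 1 else 0) * (-(ℓ (kstar ℓ (p t)) i)) ≤ ε2) :
    ∀ ℓ ∈ L, ∀ c ∈ C,
      (1 / T : ℝ) * ∑ t, ℓ (kstar ℓ (p t)) (y t)
        ≤ (1 / T : ℝ) * ∑ t, ℓ (c (x t)) (y t) + ε1 + ε2 := by
  intro ℓ hℓ c hc
  have hMA' := hMA ℓ hℓ c hc
  have hCal' := hCal ℓ hℓ
  have hTpos : (0:ℝ) ≤ 1 / T := by positivity
  have key : ∀ t, ℓ (kstar ℓ (p t)) (y t) ≤ ℓ (c (x t)) (y t)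
      + ((∑ i, (p t i - if y t = i then 1 else 0) * ℓ (c (x t)) i)
      + (∑ i, (p t i - if y t = i then 1 else 0) * (-(ℓ (kstar ℓ (p t)) i)))) := by
    intro t
    have h1 := hks ℓ hℓ (p t) (hp t) (c (x t))
    have e1 : ∀ f : Fin k → ℝ, ∑ i, (p t i - if y t = i then (1:ℝ) else 0) * f i
        = (∑ i, p t i * f i) - f (y t) := by
      intro f
      rw [Finset.sum_congr rfl (fun i _ => sub_mul _ _ _), Finset.sum_sub_distrib]
      simp
    rw [e1 (fun i => ℓ (c (x t)) i), e1 (fun i => -(ℓ (kstar ℓ (p t)) i))]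
    have e2 : ∑ i, p t i * -(ℓ (kstar ℓ (p t)) i) = -∑ i, p t i * ℓ (kstar ℓ (p t)) i := by
      simp [mul_neg]
    rw [e2]
    linarith
  have hsum : ∑ t, ℓ (kstar ℓ (p t)) (y t)
      ≤ ∑ t, (ℓ (c (x t)) (y t)
        + ((∑ i, (p t i - if y t = i then 1 else 0) * ℓ (c (x t)) i)
        + (∑ i, (p t i - if y t = i then 1 else 0) * (-(ℓ (kstar ℓ (p t)) i))))) :=
    Finset.sum_le_sum fun t _ => key t
  have hmul := mul_le_mul_of_nonneg_left hsum hTpos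
  rw [Finset.sum_add_distrib, Finset.sum_add_distrib, mul_add, mul_add] at hmul
  linarith
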